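/- Let f, g : ℕ → ℕ and suppose g is bounded-to-one, i.e. there exists k ∈ ℕ such that for every m ∈ ℕ the fiber g⁻¹({m}) has at most k elements. If u is an ultrafilter on ℕ such that the image ultrafilters satisfy f(u) = g(u), then {n ∈ ℕ | f(n) = g(n)} ∈ u. -/

import Mathlib

open Finset

/-- Finite coloring step: for any finite vertex set `S`, there is a `(2k+1)`-coloring
proper on all "edges" `(g n, f n)` lying within `S`. -/
lemma finite_coloring (k : ℕ) (f g : ℕ → ℕ) (t : ℕ → Finset ℕ)
    (ht : ∀ m, g ⁻¹' {m} ⊆ ↑(t m)) (htk : ∀ m, (t m).card ≤ k) :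
    ∀ S : Finset ℕ, ∃ c : ℕ → Fin (2 * k + 1),
      ∀ n, f n ∈ S → g n ∈ S → f n ≠ g n → c (f n) ≠ c (g n) := by
  intro S
  induction S using Finset.strongInduction with
  | _ S IH =>
  rcases S.eq_empty_or_nonempty with rfl | hS
  · exact ⟨fun _ => 0, fun n hn => by simp at hn⟩
  · set out : ℕ → Finset ℕ := fun v => (t v).image f with hout
    have hkout : ∀ v, (out v).card ≤ k := fun v =>
      le_trans (Finset.card_image_le) (htk v)
    set inS : ℕ → Finset ℕ := fun v => S.filter (fun w => v ∈ out w) with hinS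
    -- counting: some vertex has small in-degree
    have hsum : ∑ v ∈ S, (inS v).card ≤ ∑ v ∈ S, k := by
      have : ∑ v ∈ S, (inS v).card = ∑ w ∈ S, (S.filter (fun v => v ∈ out w)).card := by
        simp only [hinS, Finset.card_filter]
        exact Finset.sum_comm
      rw [this]
      apply Finset.sum_le_sum
      intro w _
      exact le_trans (Finset.card_le_card (fun x hx => (Finset.mem_filter.mp hx).2)) (hkout w)
    obtain ⟨v, hvS, hv⟩ := Finset.exists_le_of_sum_le hS hsum
    obtain ⟨c, hc⟩ := IH (S.erase v) (Finset.erase_ssubset hvS)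
    set Nbr : Finset ℕ := inS v ∪ (out v ∩ S) with hNbr
    have hNbrcard : (Nbr.image c).card < 2 * k + 1 := by
      calc (Nbr.image c).card ≤ Nbr.card := Finset.card_image_le
        _ ≤ (inS v).card + (out v ∩ S).card := Finset.card_union_le _ _
        _ ≤ k + k := Nat.add_le_add hv
              (le_trans (Finset.card_le_card (Finset.inter_subset_left)) (hkout v))
        _ < 2 * k + 1 := by omega
    have : ∃ j : Fin (2 * k + 1), j ∉ Nbr.image c := by
      by_contra hcon
      push_neg at hcon
      have := Finset.card_le_card (fun j _ => hcon j : (Finset.univ : Finset (Fin (2*k+1))) ⊆ _)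
      simp at this
      omega
    obtain ⟨j, hj⟩ := this
    refine ⟨Function.update c v j, ?_⟩
    intro n hfS hgS hne
    have hmemout : f n ∈ out (g n) := by
      apply Finset.mem_image_of_mem
      exact ht (g n) rfl
    by_cases hfv : f n = v
    · have hgv : g n ≠ v := fun hgv => hne (hfv.trans hgv.symm)
      rw [hfv, Function.update_self, Function.update_of_ne hgv]
      have : c (g n) ∈ Nbr.image c := by
        apply Finset.mem_image_of_mem
        apply Finset.mem_union_left
        exact Finset.mem_filter.mpr ⟨hgS, hfv ▸ hmemout⟩
      exact fun hEq => hj (hEq ▸ this)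
    · by_cases hgv : g n = v
      · rw [hgv, Function.update_self, Function.update_of_ne hfv]
        have : c (f n) ∈ Nbr.image c := by
          apply Finset.mem_image_of_mem
          apply Finset.mem_union_right
          exact Finset.mem_inter.mpr ⟨hgv ▸ hmemout, hfS⟩
        exact fun hEq => hj (hEq.symm ▸ this)
      · rw [Function.update_of_ne hfv, Function.update_of_ne hgv]
        exact hc n (Finset.mem_erase.mpr ⟨hfv, hfS⟩) (Finset.mem_erase.mpr ⟨hgv, hgS⟩) hne

/-- A global coloring proper on all edges `(g n, f n)`, obtained from the finite
colorings by an ultrafilter-limit (compactness) argument. -/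
lemma global_coloring (k : ℕ) (f g : ℕ → ℕ) (t : ℕ → Finset ℕ)
    (ht : ∀ m, g ⁻¹' {m} ⊆ ↑(t m)) (htk : ∀ m, (t m).card ≤ k) :
    ∃ c : ℕ → Fin (2 * k + 1), ∀ n, f n ≠ g n → c (f n) ≠ c (g n) := by
  choose cN hcN using fun N => finite_coloring k f g t ht htk (Finset.range N)
  let w : Ultrafilter ℕ := Filter.hyperfilter ℕ
  have hlim : ∀ v : ℕ, ∃ j : Fin (2 * k + 1), {N | cN N v = j} ∈ w := by
    intro v
    obtain ⟨j, hj⟩ := Ultrafilter.eq_pure_of_finite (w.map (fun N => cN N v))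
    refine ⟨j, ?_⟩
    have : {j} ∈ w.map (fun N => cN N v) := by rw [hj]; exact Filter.mem_pure.mpr rfl
    simp at this; exact this
  choose c hc using hlim
  refine ⟨c, ?_⟩
  intro n hne
  have hcof : {N | max (f n) (g n) < N} ∈ w := by
    apply Filter.hyperfilter_le_cofinite
    rw [Filter.mem_cofinite]
    apply Set.Finite.subset (Set.finite_le_nat (max (f n) (g n)))
    intro x hx
    simp only [Set.mem_compl_iff, Set.mem_setOf_eq, not_lt] at hx ⊢
    exact hx
  have h1 : {N | cN N (f n) = c (f n)} ∩ {N | cN N (g n) = c (g n)}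
      ∩ {N | max (f n) (g n) < N} ∈ w :=
    Filter.inter_mem (Filter.inter_mem (hc _) (hc _)) hcof
  obtain ⟨N, ⟨⟨hNf, hNg⟩, hNlt⟩⟩ := w.nonempty_of_mem h1
  have hfN : f n ∈ Finset.range N := Finset.mem_range.mpr (lt_of_le_of_lt (le_max_left _ _) hNlt)
  have hgN : g n ∈ Finset.range N := Finset.mem_range.mpr (lt_of_le_of_lt (le_max_right _ _) hNlt)
  have := hcN N n hfN hgN hne
  rw [hNf, hNg] at this
  exact this

/-- If `g` is bounded-to-one and the image ultrafilters `f(u)` and `g(u)` coincide,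
then `f` and `g` agree `u`-almost everywhere. -/
theorem stmt_2 (f g : ℕ → ℕ)
    (hg : ∃ k : ℕ, ∀ m : ℕ, ∃ s : Finset ℕ, g ⁻¹' {m} ⊆ ↑s ∧ s.card ≤ k)
    (u : Ultrafilter ℕ) (h : u.map f = u.map g) :
    {n : ℕ | f n = g n} ∈ u := by
  obtain ⟨k, hk⟩ := hg
  choose t ht htk using hk
  obtain ⟨c, hc⟩ := global_coloring k f g t ht htk
  by_contra hB
  have hB' : {n : ℕ | f n = g n}ᶜ ∈ u := Ultrafilter.compl_mem_iff_notMem.mpr hB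
  obtain ⟨j, hj⟩ := Ultrafilter.eq_pure_of_finite (u.map (fun n => c (f n)))
  have hfj : {n : ℕ | c (f n) = j} ∈ u := by
    have : {j} ∈ u.map (fun n => c (f n)) := by rw [hj]; exact Filter.mem_pure.mpr rfl
    simp at this; exact this
  have hgj : {n : ℕ | c (g n) = j} ∈ u := by
    have h1 : {m : ℕ | c m = j} ∈ u.map f := hfj
    have h2 : {m : ℕ | c m = j} ∈ u.map g := h ▸ h1
    exact h2
  obtain ⟨n, ⟨hn1, hn2⟩, hn3⟩ := u.nonempty_of_mem
    (Filter.inter_mem (Filter.inter_mem hfj hgj) hB')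
  exact hc n hn3 (hn1.trans hn2.symm)
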